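/- Let F be a field, A an n×n matrix over F, p, s, τ natural numbers, λ_1,…,λ_p pairwise distinct nonzero elements of F, and M_{j,i} (1 ≤ j ≤ p, 0 ≤ i < s) n×n matrices over F. Suppose that for every k ≥ τ: A^k = ∑_{j=1}^{p} λ_j^k · ∑_{i=0}^{s−1} C(k,i)·M_{j,i}. Then A is nilpotent if and only if M_{j,i} = 0 for all j and i. -/

import Mathlib

open Finset

private lemma helper_shift {F : Type*} [Field F] (s k : ℕ) (c : ℕ → F) :
    ∑ i ∈ Finset.range (s+1), (((k+1).choose i : F) - (k.choose i : F)) * c i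
      = ∑ i ∈ Finset.range s, (k.choose i : F) * c (i+1) := by
  rw [Finset.sum_range_succ']
  simp only [Nat.choose_succ_succ, Nat.cast_add, Nat.choose_zero_right]
  push_cast
  simp only [sub_self, zero_mul, add_zero, Nat.cast_one]
  apply Finset.sum_congr rfl
  intro i _
  ring

private lemma lemA {F : Type*} [Field F] :
    ∀ (s K : ℕ) (c : ℕ → F),
    (∀ k, K ≤ k → ∑ i ∈ Finset.range s, (k.choose i : F) * c i = 0) →
    ∀ i, i < s → c i = 0 := by
  intro s
  induction s with
  | zero => intro K c _ i hi; omega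
  | succ s ih =>
    intro K c h
    have h' : ∀ i, i < s → c (i+1) = 0 := by
      apply ih K (fun i => c (i+1))
      intro k hk
      have h1 := h k hk
      have h2 := h (k+1) (by omega)
      have key := helper_shift s k c
      have e : ∑ i ∈ Finset.range (s+1), (((k+1).choose i : F) - (k.choose i : F)) * c i
          = ∑ i ∈ Finset.range (s+1), ((k+1).choose i : F) * c i
            - ∑ i ∈ Finset.range (s+1), (k.choose i : F) * c i := by
        rw [← Finset.sum_sub_distrib]; apply Finset.sum_congr rfl; intro i _; ring
      rw [e, h1, h2] at key
      simpa using key.symm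
    have h0 : c 0 = 0 := by
      have h1 := h K le_rfl
      rw [Finset.sum_range_succ'] at h1
      have e : ∑ i ∈ Finset.range s, ((K.choose (i+1) : F)) * c (i+1) = 0 := by
        apply Finset.sum_eq_zero; intro i hi
        rw [h' i (Finset.mem_range.mp hi)]; ring
      rw [e] at h1; simpa using h1
    intro i hi
    cases i with
    | zero => exact h0
    | succ i => exact h' i (by omega)

private def stepB {F : Type*} [Field F] (a μ : F) (d : ℕ → F) : ℕ → F :=
  fun i => (a - μ) * d i + a * d (i+1)

private lemma stepB_support {F : Type*} [Field F] (a μ : F) (d : ℕ → F) (s : ℕ)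
    (hd : ∀ i, s ≤ i → d i = 0) : ∀ i, s ≤ i → stepB a μ d i = 0 := by
  intro i hi
  unfold stepB
  rw [hd i hi, hd (i+1) (by omega)]; ring

private lemma stepB_inj {F : Type*} [Field F] {a μ : F} (hne : a ≠ μ) (s : ℕ) (d : ℕ → F)
    (hd : ∀ i, s ≤ i → d i = 0) (hz : ∀ i, stepB a μ d i = 0) : ∀ i, d i = 0 := by
  have aux : ∀ t i, s ≤ i + t → d i = 0 := by
    intro t
    induction t with
    | zero => intro i hi; exact hd i (by omega)
    | succ t ih =>
      intro i hi
      by_cases hsi : s ≤ i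
      · exact hd i hsi
      · have h1 : d (i+1) = 0 := ih (i+1) (by omega)
        have h2 := hz i
        unfold stepB at h2
        rw [h1] at h2
        have h3 : (a - μ) * d i = 0 := by linear_combination h2
        rcases mul_eq_zero.mp h3 with h | h
        · exact absurd (sub_eq_zero.mp h) hne
        · exact h
  intro i; exact aux s i (by omega)

private lemma stepB_iter_support {F : Type*} [Field F] (a μ : F) (s : ℕ) :
    ∀ (m : ℕ) (d : ℕ → F), (∀ i, s ≤ i → d i = 0) →
    ∀ i, s ≤ i → (stepB a μ)^[m] d i = 0 := by
  intro m
  induction m with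
  | zero => intro d hd; simpa using hd
  | succ m ih =>
    intro d hd
    rw [Function.iterate_succ_apply]
    exact ih _ (stepB_support a μ d s hd)

private lemma stepB_iter_inj {F : Type*} [Field F] {a μ : F} (hne : a ≠ μ) (s : ℕ) :
    ∀ (m : ℕ) (d : ℕ → F), (∀ i, s ≤ i → d i = 0) →
    (∀ i, (stepB a μ)^[m] d i = 0) → ∀ i, d i = 0 := by
  intro m
  induction m with
  | zero => intro d _ hz; simpa using hz
  | succ m ih =>
    intro d hd hz
    rw [Function.iterate_succ_apply] at hz
    have := ih (stepB a μ d) (stepB_support a μ d s hd) hz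
    exact stepB_inj hne s d hd this

private lemma stepB_diag {F : Type*} [Field F] (μ : F) :
    ∀ (m : ℕ) (d : ℕ → F) (i : ℕ), (stepB μ μ)^[m] d i = μ ^ m * d (i + m) := by
  intro m
  induction m with
  | zero => intro d i; simp
  | succ m ih =>
    intro d i
    rw [Function.iterate_succ_apply, ih]
    unfold stepB
    simp only [sub_self, zero_mul, zero_add]
    rw [pow_succ]
    have : i + m + 1 = i + (m + 1) := by omega
    rw [this]; ring

private lemma lemB {F : Type*} [Field F] :
    ∀ (p : ℕ) (lam : Fin p → F), (∀ j, lam j ≠ 0) → Function.Injective lam →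
    ∀ (s K : ℕ) (c : Fin p → ℕ → F),
    (∀ j i, s ≤ i → c j i = 0) →
    (∀ k, K ≤ k → ∑ j, lam j ^ k * ∑ i ∈ Finset.range s, (k.choose i : F) * c j i = 0) →
    ∀ j i, c j i = 0 := by
  intro p
  induction p with
  | zero => intro lam _ _ s K c _ _ j; exact j.elim0
  | succ p ih =>
    intro lam hlam hinj s K c hsupp hyp
    set μ := lam (Fin.last p) with hμ
    have step_hyp : ∀ (c : Fin (p+1) → ℕ → F),
        (∀ j i, s ≤ i → c j i = 0) →
        (∀ k, K ≤ k → ∑ j, lam j ^ k * ∑ i ∈ Finset.range s, (k.choose i : F) * c j i = 0) →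
        (∀ k, K ≤ k → ∑ j, lam j ^ k *
           ∑ i ∈ Finset.range s, (k.choose i : F) * (stepB (lam j) μ (c j)) i = 0) := by
      intro c hs hy k hk
      have h1 := hy k hk
      have h2 := hy (k+1) (by omega)
      have key : ∀ j : Fin (p+1),
          ∑ i ∈ Finset.range s, (k.choose i : F) * (stepB (lam j) μ (c j)) i
          = lam j * ∑ i ∈ Finset.range s, ((k+1).choose i : F) * c j i
            - μ * ∑ i ∈ Finset.range s, (k.choose i : F) * c j i := by
        intro j
        have hshift : ∑ i ∈ Finset.range s, (((k+1).choose i : F) - (k.choose i : F)) * c j i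
            = ∑ i ∈ Finset.range s, (k.choose i : F) * c j (i+1) := by
          have hh := helper_shift s k (c j)
          rw [Finset.sum_range_succ, hs j s le_rfl, mul_zero, add_zero] at hh
          exact hh
        have e1 : ∑ i ∈ Finset.range s, (k.choose i : F) * (stepB (lam j) μ (c j)) i
            = (lam j - μ) * (∑ i ∈ Finset.range s, (k.choose i : F) * c j i)
              + lam j * (∑ i ∈ Finset.range s, (k.choose i : F) * c j (i+1)) := by
          rw [Finset.mul_sum, Finset.mul_sum, ← Finset.sum_add_distrib]
          apply Finset.sum_congr rfl; intro i _
          unfold stepB; ring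
        rw [e1, ← hshift]
        have e2 : ∑ i ∈ Finset.range s, (((k+1).choose i : F) - (k.choose i : F)) * c j i
            = ∑ i ∈ Finset.range s, ((k+1).choose i : F) * c j i
              - ∑ i ∈ Finset.range s, (k.choose i : F) * c j i := by
          rw [← Finset.sum_sub_distrib]; apply Finset.sum_congr rfl; intro i _; ring
        rw [e2]; ring
      calc ∑ j, lam j ^ k * ∑ i ∈ Finset.range s, (k.choose i : F) * (stepB (lam j) μ (c j)) i
          = ∑ j, (lam j ^ (k+1) * ∑ i ∈ Finset.range s, ((k+1).choose i : F) * c j i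
              - μ * (lam j ^ k * ∑ i ∈ Finset.range s, (k.choose i : F) * c j i)) := by
            apply Finset.sum_congr rfl; intro j _; rw [key j]; ring
        _ = (∑ j, lam j ^ (k+1) * ∑ i ∈ Finset.range s, ((k+1).choose i : F) * c j i)
              - μ * ∑ j, lam j ^ k * ∑ i ∈ Finset.range s, (k.choose i : F) * c j i := by
            rw [Finset.sum_sub_distrib, Finset.mul_sum]
        _ = 0 := by rw [h1, h2]; ring
    -- iterate
    set cm : ℕ → Fin (p+1) → ℕ → F := fun m j => (stepB (lam j) μ)^[m] (c j) with hcm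
    have cm_supp : ∀ m j i, s ≤ i → cm m j i = 0 := by
      intro m j i hi
      exact stepB_iter_support (lam j) μ s m (c j) (hsupp j) i hi
    have cm_hyp : ∀ m, ∀ k, K ≤ k →
        ∑ j, lam j ^ k * ∑ i ∈ Finset.range s, (k.choose i : F) * cm m j i = 0 := by
      intro m
      induction m with
      | zero => exact hyp
      | succ m ihm =>
        have := step_hyp (cm m) (fun j i hi => cm_supp m j i hi) ihm
        intro k hk
        have h := this k hk
        convert h using 3 with j _ i _
        simp only [hcm]
        rw [Function.iterate_succ_apply']
    have hlast0 : ∀ i, cm s (Fin.last p) i = 0 := by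
      intro i
      simp only [hcm]
      rw [← hμ, stepB_diag μ s (c (Fin.last p)) i]
      rw [hsupp (Fin.last p) (i + s) (by omega)]
      ring
    -- apply ih to the castSucc part
    have hcast0 : ∀ (j : Fin p) (i : ℕ), cm s (Fin.castSucc j) i = 0 := by
      apply ih (fun j => lam (Fin.castSucc j)) (fun j => hlam _)
        (hinj.comp (Fin.castSucc_injective p)) s K
        (fun j => cm s (Fin.castSucc j))
        (fun j i hi => cm_supp s (Fin.castSucc j) i hi)
      intro k hk
      have h := cm_hyp s k hk
      rw [Fin.sum_univ_castSucc] at h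
      have e : ∑ i ∈ Finset.range s, (k.choose i : F) * cm s (Fin.last p) i = 0 := by
        apply Finset.sum_eq_zero; intro i _; rw [hlast0 i]; ring
      rw [e, mul_zero, add_zero] at h
      exact h
    have hc_cast : ∀ (j : Fin p) (i : ℕ), c (Fin.castSucc j) i = 0 := by
      intro j
      have hne : lam (Fin.castSucc j) ≠ μ := by
        rw [hμ]
        intro h
        have := hinj h
        exact absurd this (Fin.ne_of_lt (Fin.castSucc_lt_last j))
      exact stepB_iter_inj hne s s (c (Fin.castSucc j)) (hsupp _) (hcast0 j)
    have hc_last : ∀ i, c (Fin.last p) i = 0 := by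
      have hsum : ∀ k, K ≤ k → ∑ i ∈ Finset.range s, (k.choose i : F) * c (Fin.last p) i = 0 := by
        intro k hk
        have h := hyp k hk
        rw [Fin.sum_univ_castSucc] at h
        have e : ∑ j : Fin p, lam (Fin.castSucc j) ^ k *
            ∑ i ∈ Finset.range s, (k.choose i : F) * c (Fin.castSucc j) i = 0 := by
          apply Finset.sum_eq_zero; intro j _
          have e2 : ∑ i ∈ Finset.range s, (k.choose i : F) * c (Fin.castSucc j) i = 0 := by
            apply Finset.sum_eq_zero; intro i _; rw [hc_cast j i]; ring
          rw [e2]; ring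
        rw [e, zero_add] at h
        have hμk : μ ^ k ≠ 0 := pow_ne_zero k (hlam (Fin.last p))
        rcases mul_eq_zero.mp h with h | h
        · exact absurd h hμk
        · exact h
      intro i
      by_cases hi : i < s
      · exact lemA s K (c (Fin.last p)) hsum i hi
      · exact hsupp (Fin.last p) i (by omega)
    intro j i
    rcases Fin.eq_castSucc_or_eq_last j with ⟨j', rfl⟩ | rfl
    · exact hc_cast j' i
    · exact hc_last i

/-- If `A^k` agrees with a purely geometric sequence for all `k ≥ τ`, then `A` is nilpotent
iff all the coefficient matrices of the geometric part vanish. -/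
theorem isNilpotent_iff_geometric_part_zero
    (F : Type*) [Field F] (n : Type*) [Fintype n] [DecidableEq n] [Nonempty n]
    (A : Matrix n n F) (p s τ : ℕ)
    (lam : Fin p → F) (hlam : ∀ j, lam j ≠ 0) (hinj : Function.Injective lam)
    (M : Fin p → ℕ → Matrix n n F)
    (hagree : ∀ k : ℕ, τ ≤ k →
      A ^ k = ∑ j : Fin p, lam j ^ k •
        ∑ i ∈ Finset.range s, (k.choose i : F) • M j i) :
    IsNilpotent A ↔ ∀ (j : Fin p) (i : ℕ), i < s → M j i = 0 := by
  constructor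
  · rintro ⟨N, hN⟩
    intro j i his
    ext a b
    set c : Fin p → ℕ → F := fun j i => if i < s then (M j i) a b else 0 with hc
    have key : ∀ j i, c j i = 0 := by
      apply lemB p lam hlam hinj s (max τ N) c
      · intro j i hi; simp only [hc]; rw [if_neg (by omega)]
      · intro k hk
        have hk0 : A ^ k = 0 := by
          have : A ^ k = A ^ N * A ^ (k - N) := by
            rw [← pow_add]
            congr 1
            omega
          rw [this, hN, zero_mul]
        have h := hagree k (le_trans (le_max_left τ N) hk)
        rw [hk0] at h
        have h' := congrArg (fun X => X a b) h.symm
        simp only [Matrix.sum_apply, Matrix.smul_apply, Matrix.zero_apply, smul_eq_mul] at h'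
        rw [← h']
        apply Finset.sum_congr rfl
        intro j' _
        congr 1
        apply Finset.sum_congr rfl
        intro i' hi'
        simp only [hc]
        rw [if_pos (Finset.mem_range.mp hi')]
    have := key j i
    simpa only [hc, if_pos his, Matrix.zero_apply] using this
  · intro h
    refine ⟨τ + 1, ?_⟩
    rw [hagree (τ + 1) (by omega)]
    apply Finset.sum_eq_zero
    intro j _
    have e : ∑ i ∈ Finset.range s, ((τ+1).choose i : F) • M j i = 0 := by
      apply Finset.sum_eq_zero
      intro i hi
      rw [h j i (Finset.mem_range.mp hi), smul_zero]
    rw [e, smul_zero]
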